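/- Let 𝒩 be a measurable normed space, i.e. a real normed space with its Borel σ-algebra such that addition is measurable with respect to the product σ-algebra Borel(𝒩)⊗Borel(𝒩). Let κ be the density of 𝒩 and let S be any set of cardinality κ. Then there is no probability measure defined on all subsets of S (the σ-algebra 𝔓(S)) that assigns measure zero to every singleton. -/
import Mathlib

open MeasureTheory Topology

noncomputable section

/-- The density of a topological space: the smallest cardinality of a dense subset. -/
def density (N : Type*) [TopologicalSpace N] : Cardinal :=
  ⨅ D : {D : Set N // Dense D}, Cardinal.mk D.1

section Aux

variable {N : Type u} [NormedAddCommGroup N] [NormedSpace ℝ N]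

lemma aux_exists_far (s : Set N) (hs : Cardinal.mk s < density N)
    (h0 : Cardinal.aleph0 < density N) :
    ∃ z : N, ‖z‖ = 1 ∧ ∀ y ∈ Submodule.span ℝ s, (3:ℝ)/4 ≤ ‖z - y‖ := by
  classical
  set F := (Submodule.span ℝ s).topologicalClosure with hFdef
  have hFc : IsClosed (F : Set N) := Submodule.isClosed_topologicalClosure _
  have hproper : ∃ v : N, v ∉ F := by
    by_contra hcon
    push_neg at hcon
    let g : List (ℚ × s) → N := fun l => (l.map fun p => (p.1 : ℝ) • (p.2 : N)).sum
    let D : Set N := Set.range g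
    have hDadd : ∀ a ∈ D, ∀ b ∈ D, a + b ∈ D := by
      rintro _ ⟨l1, rfl⟩ _ ⟨l2, rfl⟩
      exact ⟨l1 ++ l2, by simp [g]⟩
    have hDsmul : ∀ (q : ℚ), ∀ a ∈ D, (q : ℝ) • a ∈ D := by
      rintro q _ ⟨l, rfl⟩
      refine ⟨l.map fun p => (q * p.1, p.2), ?_⟩
      simp only [g, List.map_map, Function.comp_def, List.smul_sum, Rat.cast_mul, mul_smul]
    have hclosadd : ∀ a ∈ closure D, ∀ b ∈ closure D, a + b ∈ closure D := by
      intro a ha b hb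
      have h1 : (a, b) ∈ closure (D ×ˢ D) := by
        rw [closure_prod_eq]; exact ⟨ha, hb⟩
      have h3 : a + b ∈ closure ((fun p : N × N => p.1 + p.2) '' (D ×ˢ D)) :=
        image_closure_subset_closure_image (f := fun p : N × N => p.1 + p.2) continuous_add
          ⟨(a, b), h1, rfl⟩
      refine closure_mono ?_ h3
      rintro _ ⟨⟨u, v⟩, ⟨hu, hv⟩, rfl⟩
      exact hDadd _ hu _ hv
    have hclossmul : ∀ (r : ℝ), ∀ a ∈ closure D, r • a ∈ closure D := by
      intro r a ha
      have hQ : Dense (Set.range ((↑) : ℚ → ℝ)) := Rat.denseRange_cast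
      have h1 : (r, a) ∈ closure ((Set.range ((↑) : ℚ → ℝ)) ×ˢ D) := by
        rw [closure_prod_eq]; exact ⟨hQ r, ha⟩
      have h3 : r • a ∈ closure ((fun p : ℝ × N => p.1 • p.2) '' ((Set.range ((↑) : ℚ → ℝ)) ×ˢ D)) :=
        image_closure_subset_closure_image (f := fun p : ℝ × N => p.1 • p.2) continuous_smul
          ⟨(r, a), h1, rfl⟩
      refine closure_mono ?_ h3
      rintro _ ⟨⟨q0, v⟩, ⟨⟨q, rfl⟩, hv⟩, rfl⟩
      exact hDsmul q v hv
    have hspan : ∀ y ∈ Submodule.span ℝ s, y ∈ closure D := by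
      intro y hy
      induction hy using Submodule.span_induction with
      | mem x h => exact subset_closure ⟨[(1, ⟨x, h⟩)], by simp [g]⟩
      | zero => exact subset_closure ⟨[], by simp [g]⟩
      | add x y hx hy ihx ihy => exact hclosadd _ ihx _ ihy
      | smul r x hx ihx => exact hclossmul r _ ihx
    have hdense : Dense D := by
      intro v
      have hv : v ∈ closure (Submodule.span ℝ s : Set N) := by
        have h := hcon v
        rw [hFdef] at h
        rw [← Submodule.topologicalClosure_coe]
        exact h
      exact closure_minimal (fun y hy => hspan y hy) isClosed_closure hv
    have hcard : Cardinal.mk D < density N := by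
      have h1 : Cardinal.mk D ≤ Cardinal.mk (List (ℚ × s)) := Cardinal.mk_range_le
      have h2 : Cardinal.mk (List (ℚ × s)) ≤ max Cardinal.aleph0 (Cardinal.mk (ℚ × s)) :=
        Cardinal.mk_list_le_max _
      have h3 : Cardinal.mk (ℚ × s) < density N := by
        have : Cardinal.mk (ℚ × s) = Cardinal.aleph0 * Cardinal.mk s := by
          simp [Cardinal.mk_prod]
        rw [this]
        exact Cardinal.mul_lt_of_lt h0.le h0 hs
      calc Cardinal.mk D ≤ max Cardinal.aleph0 (Cardinal.mk (ℚ × s)) := h1.trans h2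
        _ < density N := max_lt h0 h3
    have hle : density N ≤ Cardinal.mk D := ciInf_le' _ (⟨D, hdense⟩ : {D : Set N // Dense D})
    exact absurd (hle.trans_lt hcard) (lt_irrefl _)
  obtain ⟨x₀, hx₀F, hx₀⟩ := riesz_lemma (𝕜 := ℝ) hFc hproper (r := 3/4) (by norm_num)
  have hx0 : x₀ ≠ 0 := fun h => hx₀F (h ▸ F.zero_mem)
  have hn : 0 < ‖x₀‖ := norm_pos_iff.mpr hx0
  refine ⟨‖x₀‖⁻¹ • x₀, ?_, ?_⟩
  · rw [norm_smul, norm_inv, norm_norm, inv_mul_cancel₀ hn.ne']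
  · intro y hy
    have hyF : ‖x₀‖ • y ∈ F := F.smul_mem _ (Submodule.le_topologicalClosure _ hy)
    have hkey := hx₀ _ hyF
    have heq : ‖x₀‖⁻¹ • x₀ - y = ‖x₀‖⁻¹ • (x₀ - ‖x₀‖ • y) := by
      rw [smul_sub, smul_smul, inv_mul_cancel₀ hn.ne', one_smul]
    rw [heq, norm_smul, norm_inv, norm_norm]
    calc (3:ℝ)/4 = ‖x₀‖⁻¹ * (3/4 * ‖x₀‖) := by field_simp
      _ ≤ ‖x₀‖⁻¹ * ‖x₀ - ‖x₀‖ • y‖ := by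
          exact mul_le_mul_of_nonneg_left hkey (inv_nonneg.mpr hn.le)

end Aux
theorem stmt14 {N : Type u} [NormedAddCommGroup N] [NormedSpace ℝ N]
    [MeasurableSpace N] [BorelSpace N]
    (hadd : Measurable fun p : N × N => p.1 + p.2)
    {S : Type u} (hS : Cardinal.mk S = density N) :
    ¬ ∃ μ : @Measure S ⊤, @IsProbabilityMeasure S ⊤ μ ∧ ∀ s : S, μ {s} = 0 := by
  classical
  letI : MeasurableSpace S := ⊤
  rintro ⟨μ, hprob, hsing⟩
  haveI := hprob
  by_cases hcount : Cardinal.mk S ≤ Cardinal.aleph0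
  · haveI : Countable S := Cardinal.mk_le_aleph0_iff.mp hcount
    have h0 : μ Set.univ = 0 := by
      rw [← Set.iUnion_of_singleton S]
      exact measure_iUnion_null fun s => hsing s
    rw [measure_univ] at h0
    exact one_ne_zero h0
  push_neg at hcount
  have h0 : Cardinal.aleph0 < density N := hS ▸ hcount
  -- least cardinality of a set of positive measure
  set C : Set Cardinal := {c | ∃ Y : Set S, μ Y ≠ 0 ∧ Cardinal.mk Y = c} with hC
  have hCne : C.Nonempty := ⟨Cardinal.mk (Set.univ : Set S), Set.univ, by simp, rfl⟩
  obtain ⟨Y, hY0, hYcard⟩ : sInf C ∈ C := csInf_mem hCne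
  set δ := sInf C with hδ
  have hmin : ∀ Z : Set S, Cardinal.mk Z < δ → μ Z = 0 := by
    intro Z hZ
    by_contra hZ0
    exact absurd (csInf_le' (show Cardinal.mk ↑Z ∈ C from ⟨Z, hZ0, rfl⟩)) (not_le.mpr hZ)
  have hδκ : δ ≤ Cardinal.mk S := hYcard ▸ Cardinal.mk_set_le Y
  have hδinf : Cardinal.aleph0 < δ := by
    by_contra hle
    push_neg at hle
    have : Countable Y := Cardinal.mk_le_aleph0_iff.mp (hYcard.symm ▸ hle : Cardinal.mk Y ≤ _)
    have hYc : Y.Countable := Set.countable_coe_iff.mp this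
    have : μ Y = 0 := by
      rw [← Set.biUnion_of_singleton Y]
      exact (measure_biUnion_null_iff hYc).mpr fun y _ => hsing y
    exact hY0 this
  -- the index type: ordinal of cardinality δ with all initial segments smaller
  set ι := (Cardinal.ord δ).ToType with hι
  letI : MeasurableSpace ι := ⊤
  have hmkι : Cardinal.mk ι = δ := Cardinal.mk_ord_toType δ
  have hIio : ∀ i : ι, Cardinal.mk (Set.Iio i) < δ := fun i => Cardinal.mk_Iio_ord_toType i
  -- transfinite construction of a spread-out family
  let pick : Set N → N := fun s =>
    if h : Cardinal.mk s < density N then (aux_exists_far s h h0).choose else 0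
  let x : ι → N := fun i => (IsWellFounded.wf (r := ((· < ·) : ι → ι → Prop))).fix
    (fun j ih => pick (Set.range fun k : {k // k < j} => ih k k.2)) i
  have hxeq : ∀ i, x i = pick (x '' Set.Iio i) := by
    intro i
    show WellFounded.fix _ _ i = _
    rw [WellFounded.fix_eq]
    congr 1
    exact (Set.image_eq_range _ _).symm
  have hcard : ∀ i : ι, Cardinal.mk (x '' Set.Iio i) < density N := by
    intro i
    calc Cardinal.mk (x '' Set.Iio i) ≤ Cardinal.mk (Set.Iio i) := Cardinal.mk_image_le
      _ < δ := hIio i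
      _ ≤ Cardinal.mk S := hδκ
      _ = density N := hS
  have hxspec : ∀ i : ι, ‖x i‖ = 1 ∧
      ∀ y ∈ Submodule.span ℝ (x '' Set.Iio i), (3:ℝ)/4 ≤ ‖x i - y‖ := by
    intro i
    rw [hxeq i]
    show ‖pick (x '' Set.Iio i)‖ = 1 ∧ _
    simp only [pick, dif_pos (hcard i)]
    exact ⟨(aux_exists_far _ (hcard i) h0).choose_spec.1,
      (aux_exists_far _ (hcard i) h0).choose_spec.2⟩
  have hmemspan : ∀ {i j : ι}, j < i → x j ∈ Submodule.span ℝ (x '' Set.Iio i) :=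
    fun h => Submodule.subset_span ⟨_, h, rfl⟩
  have hfar : ∀ {i : ι} {y : N}, y ∈ Submodule.span ℝ (x '' Set.Iio i) →
      (3:ℝ)/4 ≤ ‖x i - y‖ := fun h => (hxspec _).2 _ h
  have hne : ∀ {i : ι} {y : N}, y ∈ Submodule.span ℝ (x '' Set.Iio i) → x i ≠ y := by
    intro i y hy heq
    have h := hfar hy
    rw [heq, sub_self, norm_zero] at h
    linarith
  -- the key order characterization
  have hkey : ∀ s t a b : ι, b < a → x s - x t = x a - x b → t < s := by
    intro s t a b hba hE
    rcases lt_trichotomy t s with h | h | h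
    · exact h
    · exfalso
      subst h
      have h1 : x a = x b := by
        have h2 : x a - x b = 0 := by rw [← hE]; abel
        rwa [sub_eq_zero] at h2
      exact hne (hmemspan hba) h1
    · exfalso
      rcases lt_trichotomy a t with h2 | h2 | h2
      · -- a < t
        have hmem : x s - x a + x b ∈ Submodule.span ℝ (x '' Set.Iio t) :=
          Submodule.add_mem _ (Submodule.sub_mem _ (hmemspan h) (hmemspan h2))
            (hmemspan (hba.trans h2))
        apply hne hmem
        calc x t = x s - (x s - x t) := by abel
          _ = x s - (x a - x b) := by rw [hE]
          _ = x s - x a + x b := by abel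
      · -- a = t
        subst h2
        have hmem : (2⁻¹ : ℝ) • (x s + x b) ∈ Submodule.span ℝ (x '' Set.Iio a) :=
          Submodule.smul_mem _ _ (Submodule.add_mem _ (hmemspan h) (hmemspan hba))
        apply hne hmem
        have h4 : x s + x b = (2:ℝ) • x a := by
          have h5 : x s + x b = x a + x a := by
            calc x s + x b = (x s - x a) + x a + x b := by abel
              _ = (x a - x b) + x a + x b := by rw [hE]
              _ = x a + x a := by abel
          rw [h5, two_smul]
        rw [h4, smul_smul]
        norm_num
      · -- t < a
        have hmem : x s - x t + x b ∈ Submodule.span ℝ (x '' Set.Iio a) :=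
          Submodule.add_mem _ (Submodule.sub_mem _ (hmemspan (h.trans h2)) (hmemspan h2))
            (hmemspan hba)
        apply hne hmem
        calc x a = (x a - x b) + x b := by abel
          _ = (x s - x t) + x b := by rw [← hE]
  -- the Borel witness set
  set B : Set N := (fun p : ι × ι => x p.1 - x p.2) '' {p | p.2 < p.1} with hB
  have hBsep : B.Pairwise fun u v => (3:ℝ)/4 ≤ dist u v := by
    rintro u ⟨⟨a, b⟩, hab, rfl⟩ v ⟨⟨c, d⟩, hcd, rfl⟩ huv
    simp only [Set.mem_setOf_eq] at hab hcd
    rw [dist_eq_norm]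
    rcases lt_trichotomy a c with h | h | h
    · have hmem : x d + x a - x b ∈ Submodule.span ℝ (x '' Set.Iio c) :=
        Submodule.sub_mem _ (Submodule.add_mem _ (hmemspan hcd) (hmemspan h))
          (hmemspan (hab.trans h))
      have hf := hfar hmem
      have heq : ‖(x a - x b) - (x c - x d)‖ = ‖x c - (x d + x a - x b)‖ := by
        rw [← norm_neg]
        congr 1
        abel
      rw [heq]
      exact hf
    · subst h
      have hbd : b ≠ d := by
        rintro rfl
        exact huv rfl
      have heq : (x a - x b) - (x a - x d) = x d - x b := by abel
      rcases hbd.lt_or_gt with h2 | h2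
      · have hf := hfar (hmemspan h2)
        rw [heq]
        exact hf
      · have hf := hfar (hmemspan h2)
        have heq2 : ‖(x a - x b) - (x a - x d)‖ = ‖x b - x d‖ := by
          rw [heq, ← norm_neg]
          congr 1
          abel
        rw [heq2]
        exact hf
    · have hmem : x b + x c - x d ∈ Submodule.span ℝ (x '' Set.Iio a) :=
        Submodule.sub_mem _ (Submodule.add_mem _ (hmemspan hab) (hmemspan h))
          (hmemspan (hcd.trans h))
      have hf := hfar hmem
      have heq : ‖(x a - x b) - (x c - x d)‖ = ‖x a - (x b + x c - x d)‖ := by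
        congr 1
        abel
      rw [heq]
      exact hf
  have hBclosed : IsClosed B := Metric.isClosed_of_pairwise_le_dist (by norm_num) hBsep
  have hA : MeasurableSet ((fun p : N × N => p.1 + p.2) ⁻¹' B) := hadd hBclosed.measurableSet
  let ψ : ι × ι → N × N := fun p => (x p.1, -x p.2)
  have hxm : Measurable x := measurable_from_top
  have hψ : Measurable ψ :=
    Measurable.prodMk (hxm.comp measurable_fst) ((hxm.comp measurable_snd).neg)
  have hW : MeasurableSet {p : ι × ι | p.2 < p.1} := by
    have h1 := hψ hA
    have h2 : (ψ ⁻¹' ((fun p : N × N => p.1 + p.2) ⁻¹' B)) = {p : ι × ι | p.2 < p.1} := by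
      ext ⟨s, t⟩
      simp only [Set.mem_preimage, Set.mem_setOf_eq, ψ, hB, Set.mem_image]
      constructor
      · rintro ⟨⟨a, b⟩, hab, hE⟩
        exact hkey s t a b hab (by rw [hE]; abel)
      · intro h
        exact ⟨(s, t), h, by abel⟩
    rwa [h2] at h1
  -- transfer the measure
  obtain ⟨e⟩ : Nonempty (ι ≃ Y) := Cardinal.eq.mp (hmkι.trans hYcard.symm)
  let f : ι → S := fun i => (e i : S)
  have hfinj : Function.Injective f := fun i j h =>
    e.injective (Subtype.val_injective h)
  let ν : Measure ι := μ.comap f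
  have hν : ∀ E : Set ι, ν E = μ (f '' E) := fun E =>
    Measure.comap_apply f hfinj (fun s _ => MeasurableSpace.measurableSet_top) μ MeasurableSpace.measurableSet_top
  have hν_small : ∀ E : Set ι, Cardinal.mk E < δ → ν E = 0 := by
    intro E hE
    rw [hν]
    exact hmin _ (Cardinal.mk_image_le.trans_lt hE)
  have hν_univ : ν Set.univ = μ Y := by
    rw [hν, Set.image_univ]
    congr 1
    ext y
    constructor
    · rintro ⟨i, rfl⟩
      exact (e i).2
    · intro hy
      exact ⟨e.symm ⟨y, hy⟩, by simp [f]⟩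
  haveI : IsFiniteMeasure ν :=
    ⟨by rw [hν_univ]; exact measure_lt_top μ Y⟩
  have hprod1 : (ν.prod ν) {p : ι × ι | p.2 < p.1} = 0 := by
    rw [Measure.prod_apply hW]
    have hsec : ∀ i : ι, ν (Prod.mk i ⁻¹' {p : ι × ι | p.2 < p.1}) = 0 := by
      intro i
      have h1 : (Prod.mk i ⁻¹' {p : ι × ι | p.2 < p.1}) = Set.Iio i := by
        ext j
        simp [Set.mem_Iio]
      rw [h1]
      exact hν_small _ (hIio i)
    simp only [hsec]
    exact lintegral_zero
  have hprod2 : (ν.prod ν) {p : ι × ι | p.2 < p.1} = μ Y * μ Y := by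
    rw [Measure.prod_apply_symm hW]
    have hsec : ∀ j : ι, ν ((fun i => (i, j)) ⁻¹' {p : ι × ι | p.2 < p.1}) = μ Y := by
      intro j
      have h1 : ((fun i => (i, j)) ⁻¹' {p : ι × ι | p.2 < p.1}) = Set.Ioi j := by
        ext i
        simp [Set.mem_Ioi]
      rw [h1, ← Set.compl_Iic, measure_compl MeasurableSpace.measurableSet_top (measure_ne_top ν _), hν_univ]
      have h2 : ν (Set.Iic j) = 0 := by
        apply hν_small
        have h3 : Set.Iic j = insert j (Set.Iio j) := Set.Iio_insert.symm
        rw [h3]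
        calc Cardinal.mk (insert j (Set.Iio j) : Set ι) ≤ Cardinal.mk (Set.Iio j) + 1 :=
            Cardinal.mk_insert_le
          _ < δ := Cardinal.add_lt_of_lt hδinf.le (hIio j)
              (lt_trans Cardinal.one_lt_aleph0 hδinf)
      rw [h2, tsub_zero]
    calc ∫⁻ j, ν ((fun i => (i, j)) ⁻¹' {p : ι × ι | p.2 < p.1}) ∂ν
        = ∫⁻ _, μ Y ∂ν := lintegral_congr fun j => hsec j
      _ = μ Y * ν Set.univ := lintegral_const _
      _ = μ Y * μ Y := by rw [hν_univ]
  rw [hprod1] at hprod2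
  rcases mul_eq_zero.mp hprod2.symm with h | h
  · exact hY0 h
  · exact hY0 h

end
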